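/- Let Δ be an additive subgroup of ℂ, b ∈ ℂ, and let A be the vector space with basis {x_α : α ∈ Δ}. Then the operation x_α ∘ x_β = (β+b) x_{α+β} (extended bilinearly) makes A a Novikov algebra. -/

import Mathlib

open Finsupp

noncomputable def novCirc (Δ : AddSubgroup ℂ) (b : ℂ) :
    (Δ →₀ ℂ) →ₗ[ℂ] (Δ →₀ ℂ) →ₗ[ℂ] (Δ →₀ ℂ) :=
  Finsupp.lsum ℂ fun α =>
    LinearMap.toSpanSingleton ℂ _
      (Finsupp.lsum ℂ fun β => ((β : ℂ) + b) • Finsupp.lsingle (α + β))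

lemma novCirc_single (Δ : AddSubgroup ℂ) (b : ℂ) (α β : Δ) (a c : ℂ) :
    novCirc Δ b (single α a) (single β c) =
      (a * c * ((β : ℂ) + b)) • single (α + β) 1 := by
  simp only [novCirc, Finsupp.lsum_single, LinearMap.toSpanSingleton_apply,
    LinearMap.smul_apply, LinearMap.coe_smul, Pi.smul_apply, Finsupp.lsingle_apply,
    smul_smul]
  rw [show single (α + β) c = c • single (α + β) (1 : ℂ) by simp, smul_smul]
  ring_nf

/-- On the free ℂ-vector space with basis {x_α : α ∈ Δ}, the bilinear operation
x_α ∘ x_β = (β+b) x_{α+β} is a Novikov product. -/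
theorem stmt_4 (Δ : AddSubgroup ℂ) (b : ℂ) :
    ∃ circ : (Δ →₀ ℂ) →ₗ[ℂ] (Δ →₀ ℂ) →ₗ[ℂ] (Δ →₀ ℂ),
      (∀ α β : Δ, circ (single α 1) (single β 1) =
        ((β : ℂ) + b) • single (α + β) 1) ∧
      (∀ u v w, circ (circ u v) w = circ (circ u w) v) ∧
      (∀ u v w,
        circ (circ u v) w - circ u (circ v w) =
        circ (circ v u) w - circ v (circ u w)) := by
  refine ⟨novCirc Δ b, ?_, ?_, ?_⟩
  · intro α β
    simp [novCirc_single]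
  · intro u v w
    induction u using Finsupp.induction_linear with
    | zero => simp
    | add u₁ u₂ h1 h2 => simp [map_add, h1, h2]
    | single α a =>
      induction v using Finsupp.induction_linear with
      | zero => simp
      | add v₁ v₂ h1 h2 => simp [map_add, h1, h2]
      | single β c =>
        induction w using Finsupp.induction_linear with
        | zero => simp
        | add w₁ w₂ h1 h2 => simp [map_add, h1, h2]
        | single γ d =>
          simp only [novCirc_single, map_smul, LinearMap.smul_apply, smul_smul]
          rw [show α + β + γ = α + γ + β by abel]
          ring_nf
  · intro u v w
    induction u using Finsupp.induction_linear with
    | zero => simp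
    | add u₁ u₂ h1 h2 =>
      simp only [map_add, LinearMap.add_apply] at h1 h2 ⊢
      rw [← sub_eq_zero] at h1 h2 ⊢
      rw [← sub_eq_zero] at *
      abel_nf
      abel_nf at h1 h2
      linear_combination (norm := abel) h1 + h2
    | single α a =>
      induction v using Finsupp.induction_linear with
      | zero => simp
      | add v₁ v₂ h1 h2 =>
        rw [← sub_eq_zero] at h1 h2 ⊢
        simp only [map_add, LinearMap.add_apply]
        linear_combination (norm := abel) h1 + h2
      | single β c =>
        induction w using Finsupp.induction_linear with
        | zero => simp
        | add w₁ w₂ h1 h2 =>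
          rw [← sub_eq_zero] at h1 h2 ⊢
          simp only [map_add, LinearMap.add_apply]
          linear_combination (norm := abel) h1 + h2
        | single γ d =>
          simp only [novCirc_single, map_smul, LinearMap.smul_apply, smul_smul]
          rw [show β + α = α + β by abel, show α + (β + γ) = α + β + γ by abel,
            show β + (α + γ) = α + β + γ by abel]
          rw [← sub_smul, ← sub_smul]
          congr 1
          push_cast
          ring
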